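/- Let X be a complex seminormed vector space, f₁, …, f_N, g bounded ℂ-linear functionals on X, and u₁, …, u_N, v ∈ ℝ such that the system |f_k(x)| ≤ u_k (k = 1, …, N) is consistent. Then {x : |g x| ≤ v} ⊇ ⋂_{k=1}^N {x : |f_k x| ≤ u_k} if and only if there exist c₁, …, c_N ∈ ℂ with g = ∑_{k=1}^N c_k • f_k and ∑_{k=1}^N |c_k| u_k ≤ v. -/

import Mathlib

open LinearMap Submodule

set_option maxHeartbeats 1000000 in
set_option synthInstance.maxHeartbeats 100000 in
theorem stmt9 (X : Type*) [SeminormedAddCommGroup X] [NormedSpace ℂ X]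
    (N : ℕ) (f : Fin N → (X →L[ℂ] ℂ)) (g : X →L[ℂ] ℂ)
    (u : Fin N → ℝ) (v : ℝ)
    (hcons : ∃ x : X, ∀ k, ‖f k x‖ ≤ u k) :
    (⋂ k, {x : X | ‖f k x‖ ≤ u k}) ⊆ {x : X | ‖g x‖ ≤ v} ↔
      ∃ c : Fin N → ℂ, g = ∑ k, c k • f k ∧
        ∑ k, ‖c k‖ * u k ≤ v := by
  obtain ⟨x₀, hx₀⟩ := hcons
  have hu : ∀ k, 0 ≤ u k := fun k => (norm_nonneg _).trans (hx₀ k)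
  constructor
  · intro hsub
    have hv : 0 ≤ v := (norm_nonneg _).trans (hsub (Set.mem_iInter.2 hx₀))
    -- modified functionals: only the ones with u k = 0
    set m : Fin N → (X →ₗ[ℂ] ℂ) := fun k => if u k = 0 then (f k : X →ₗ[ℂ] ℂ) else 0 with hm
    set Y : Submodule ℂ X := ⨅ k, LinearMap.ker (m k) with hY
    have hYmem : ∀ {y : X}, y ∈ Y → ∀ k, u k = 0 → f k y = 0 := by
      intro y hy k hk
      have h1 := (Submodule.mem_iInf _).1 hy k
      rw [LinearMap.mem_ker, hm] at h1
      simpa [hk] using h1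
    set T : X →ₗ[ℂ] (Fin N → ℂ) :=
      LinearMap.pi (fun k => (((u k : ℝ) : ℂ))⁻¹ • (f k : X →ₗ[ℂ] ℂ)) with hT
    have hTapp : ∀ (x : X) (k : Fin N), T x k = (((u k : ℝ) : ℂ))⁻¹ * f k x := by
      intro x k; rfl
    -- key inequality on Y
    have key : ∀ y : X, y ∈ Y → ‖g y‖ ≤ v * ‖T y‖ := by
      intro y hy
      have hbound : ∀ s : ℝ, 0 < s → ‖T y‖ ≤ s → ‖g y‖ ≤ v * s := by
        intro s hs hrs
        have hxmem : ((s : ℂ)⁻¹ • y) ∈ ⋂ k, {x : X | ‖f k x‖ ≤ u k} := by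
          refine Set.mem_iInter.2 fun k => ?_
          show ‖f k ((s : ℂ)⁻¹ • y)‖ ≤ u k
          rw [map_smul, smul_eq_mul, norm_mul, norm_inv, Complex.norm_real, Real.norm_eq_abs, abs_of_pos hs]
          rcases eq_or_ne (u k) 0 with h0 | h0
          · simp [hYmem hy k h0, h0]
          · have huk : 0 < u k := lt_of_le_of_ne (hu k) (Ne.symm h0)
            have h2 : ‖T y k‖ ≤ ‖T y‖ := norm_le_pi_norm (T y) k
            rw [hTapp] at h2
            have h3 : (u k)⁻¹ * ‖f k y‖ ≤ s := by
              have : ‖(((u k : ℝ) : ℂ))⁻¹ * f k y‖ = (u k)⁻¹ * ‖f k y‖ := by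
                rw [norm_mul, norm_inv, Complex.norm_real, Real.norm_eq_abs,
                  abs_of_pos huk]
              rw [this] at h2
              exact h2.trans hrs
            have h4 : ‖f k y‖ ≤ u k * s := by
              rw [inv_mul_le_iff₀ huk] at h3
              linarith [h3]
            rw [inv_mul_le_iff₀ hs]
            linarith [h4]
        have hgs := hsub hxmem
        simp only [Set.mem_setOf_eq] at hgs
        rw [map_smul, smul_eq_mul, norm_mul, norm_inv, Complex.norm_real, Real.norm_eq_abs,
          abs_of_pos hs, inv_mul_le_iff₀ hs] at hgs
        linarith [hgs]
      refine le_of_forall_pos_le_add ?_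
      intro ε hε
      have hvp : (0:ℝ) < v + 1 := by linarith
      have hs : 0 < ‖T y‖ + ε / (v + 1) := by positivity
      have h5 := hbound (‖T y‖ + ε / (v + 1)) hs
        (le_add_of_nonneg_right (by positivity))
      have h6 : v * (ε / (v + 1)) ≤ ε := by
        rw [mul_div_assoc']
        rw [div_le_iff₀ hvp]
        nlinarith [hε.le]
      nlinarith [h5, h6]
    -- restrict T to Y
    set T' : Y →ₗ[ℂ] (Fin N → ℂ) := T.comp Y.subtype with hT'
    set gY : Y →ₗ[ℂ] ℂ := (g : X →ₗ[ℂ] ℂ).comp Y.subtype with hgY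
    have hker : LinearMap.ker T' ≤ LinearMap.ker gY := by
      intro y hy
      rw [LinearMap.mem_ker] at hy ⊢
      have h0 : T (y : X) = 0 := hy
      have h1 := key (y : X) y.2
      rw [h0, norm_zero, mul_zero] at h1
      have : ‖g (y : X)‖ = 0 := le_antisymm h1 (norm_nonneg _)
      simpa [hgY, norm_eq_zero] using this
    set W : Submodule ℂ (Fin N → ℂ) := LinearMap.range T' with hW
    set e := T'.quotKerEquivRange with he
    set hbar : (Y ⧸ LinearMap.ker T') →ₗ[ℂ] ℂ := (LinearMap.ker T').liftQ gY hker with hhbar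
    set h : W →ₗ[ℂ] ℂ := hbar.comp (e.symm : W →ₗ[ℂ] (Y ⧸ LinearMap.ker T')) with hh
    have hval : ∀ (y : Y) (hw : T' y ∈ W), h ⟨T' y, hw⟩ = g (y : X) := by
      intro y hw
      have hsymm : e.symm ⟨T' y, hw⟩ = Submodule.Quotient.mk y := by
        rw [LinearEquiv.symm_apply_eq]
        exact Subtype.ext (by simp [he, LinearMap.quotKerEquivRange_apply_mk])
      simp [hh, hsymm, hhbar, Submodule.liftQ_apply, hgY]
    have hbound' : ∀ w : W, ‖h w‖ ≤ v * ‖w‖ := by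
      intro w
      obtain ⟨y, hyw⟩ := w.2
      have hw' : T' y ∈ W := LinearMap.mem_range_self _ y
      have hw2 : w = ⟨T' y, hw'⟩ := Subtype.ext hyw.symm
      rw [hw2, hval y hw']
      have h1 := key (y : X) y.2
      have h2 : ‖(⟨T' y, hw'⟩ : W)‖ = ‖T (y : X)‖ := rfl
      rw [h2]
      exact h1
    set hC : W →L[ℂ] ℂ := h.mkContinuous v hbound' with hhC
    obtain ⟨H, hHext, hHnorm⟩ := exists_extension_norm_eq W hC
    have hHle : ‖H‖ ≤ v := by
      rw [hHnorm]
      exact h.mkContinuous_norm_le hv hbound'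
    set b : Fin N → ℂ := fun k => H (Pi.single k 1) with hb
    -- ℓ¹ bound for the coefficients
    have hsumb : ∑ k, ‖b k‖ ≤ v := by
      set σ : Fin N → ℂ := fun k =>
        if b k = 0 then 0 else (starRingEnd ℂ) (b k) / ‖b k‖ with hσ
      have hσle : ∀ k, ‖σ k‖ ≤ 1 := by
        intro k
        rcases eq_or_ne (b k) 0 with h0 | h0
        · simp [hσ, h0]
        · simp only [hσ, if_neg h0]
          rw [norm_div, Complex.norm_conj, Complex.norm_real, Real.norm_eq_abs,
            abs_of_pos (norm_pos_iff.2 h0),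
            div_self (norm_ne_zero_iff.2 h0)]
      have hσb : ∀ k, σ k * b k = ((‖b k‖ : ℝ) : ℂ) := by
        intro k
        rcases eq_or_ne (b k) 0 with h0 | h0
        · simp [hσ, h0]
        · simp only [hσ, if_neg h0]
          rw [div_mul_eq_mul_div, mul_comm, Complex.mul_conj]
          rw [← Complex.sq_norm]
          push_cast
          rw [sq]
          rw [mul_div_assoc, div_self (by exact_mod_cast norm_ne_zero_iff.2 h0), mul_one]
      have haσ : ‖σ‖ ≤ 1 := pi_norm_le_iff_of_nonneg zero_le_one |>.2 hσle
      have hsingle : σ = ∑ k, σ k • (Pi.single k (1 : ℂ) : Fin N → ℂ) := by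
        ext j
        simp [Finset.sum_apply, Pi.single_apply, Finset.sum_ite_eq']
      have hHσ : H σ = ∑ k, σ k * b k := by
        conv_lhs => rw [hsingle]
        rw [map_sum]
        simp [hb, smul_eq_mul]
      have hHσ2 : H σ = ((∑ k, ‖b k‖ : ℝ) : ℂ) := by
        rw [hHσ]
        push_cast
        exact Finset.sum_congr rfl fun k _ => hσb k
      have : ‖H σ‖ ≤ ‖H‖ * ‖σ‖ := H.le_opNorm σ
      rw [hHσ2, Complex.norm_real, Real.norm_eq_abs,
        abs_of_nonneg (Finset.sum_nonneg fun k _ => norm_nonneg _)] at this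
      calc ∑ k, ‖b k‖ ≤ ‖H‖ * ‖σ‖ := this
        _ ≤ v * 1 := mul_le_mul hHle haσ (norm_nonneg _) hv
        _ = v := mul_one v
    set c : Fin N → ℂ := fun k => (((u k : ℝ) : ℂ))⁻¹ * b k with hc
    -- representation of g on Y
    have hrep : ∀ y : X, y ∈ Y → g y = ∑ k, c k * f k y := by
      intro y hy
      have hw : T' ⟨y, hy⟩ ∈ W := LinearMap.mem_range_self _ _
      have h1 : g y = H (T y) := by
        have h2 := hHext ⟨T' ⟨y, hy⟩, hw⟩
        rw [hhC, LinearMap.mkContinuous_apply, hval ⟨y, hy⟩ hw] at h2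
        exact h2.symm
      have hsingle : T y = ∑ k, T y k • (Pi.single k (1 : ℂ) : Fin N → ℂ) := by
        ext j
        simp [Finset.sum_apply, Pi.single_apply, Finset.sum_ite_eq']
      rw [h1]
      conv_lhs => rw [hsingle]
      rw [map_sum]
      refine Finset.sum_congr rfl fun k _ => ?_
      rw [map_smul, smul_eq_mul, hTapp, hc]
      ring_nf
      rfl
    -- the remainder vanishes on Y, hence lies in span of the u k = 0 functionals
    set φ : X →ₗ[ℂ] ℂ := (g : X →ₗ[ℂ] ℂ) - ∑ k, c k • (f k : X →ₗ[ℂ] ℂ) with hφ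
    have hφker : ⨅ k, LinearMap.ker (m k) ≤ LinearMap.ker φ := by
      intro y hy
      rw [LinearMap.mem_ker, hφ]
      have := hrep y (hY ▸ hy)
      simp only [LinearMap.sub_apply, LinearMap.coe_sum, Finset.sum_apply,
        LinearMap.smul_apply, smul_eq_mul, ContinuousLinearMap.coe_coe]
      rw [this]
      ring_nf
    obtain ⟨d, hd⟩ := (mem_span_range_iff_exists_fun ℂ).1 (mem_span_of_iInf_ker_le_ker hφker)
    refine ⟨fun k => c k + if u k = 0 then d k else 0, ?_, ?_⟩
    · ext x
      have hdx : ∑ k, d k * m k x = φ x := by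
        have := congrArg (fun ψ : X →ₗ[ℂ] ℂ => ψ x) hd
        simpa [smul_eq_mul] using this
      have hφx : φ x = g x - ∑ k, c k * f k x := by
        simp [hφ, smul_eq_mul]
      simp only [ContinuousLinearMap.coe_sum', Finset.sum_apply,
        ContinuousLinearMap.coe_smul', Pi.smul_apply, smul_eq_mul]
      have : ∑ k, (c k + if u k = 0 then d k else 0) * f k x
          = ∑ k, c k * f k x + ∑ k, d k * m k x := by
        rw [← Finset.sum_add_distrib]
        refine Finset.sum_congr rfl fun k _ => ?_
        rcases eq_or_ne (u k) 0 with h0 | h0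
        · simp [hm, h0]; ring
        · simp [hm, h0]
      rw [this, hdx, hφx]
      ring
    · have hterm : ∀ k, ‖c k + if u k = 0 then d k else 0‖ * u k
          ≤ ‖b k‖ := by
        intro k
        rcases eq_or_ne (u k) 0 with h0 | h0
        · rw [h0, mul_zero]
          exact norm_nonneg _
        · have huk : 0 < u k := lt_of_le_of_ne (hu k) (Ne.symm h0)
          rw [if_neg h0, add_zero, hc]
          rw [norm_mul, norm_inv, Complex.norm_real, Real.norm_eq_abs, abs_of_pos huk]
          rw [mul_comm ((u k)⁻¹) _, mul_assoc, inv_mul_cancel₀ (ne_of_gt huk), mul_one]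
      calc ∑ k, ‖c k + if u k = 0 then d k else 0‖ * u k
          ≤ ∑ k, ‖b k‖ := Finset.sum_le_sum fun k _ => hterm k
        _ ≤ v := hsumb
  · rintro ⟨c, hg, hcv⟩ x hx
    simp only [Set.mem_iInter, Set.mem_setOf_eq] at hx ⊢
    have h1 : g x = ∑ k, c k * f k x := by
      rw [hg]
      simp [smul_eq_mul]
    rw [h1]
    calc ‖∑ k, c k * f k x‖
        ≤ ∑ k, ‖c k * f k x‖ := norm_sum_le _ _
      _ ≤ ∑ k, ‖c k‖ * u k := by
          refine Finset.sum_le_sum fun k _ => ?_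
          rw [norm_mul]
          exact mul_le_mul_of_nonneg_left (hx k) (norm_nonneg _)
      _ ≤ v := hcv
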